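/- For every integer n ≥ 1, the image of the set X₂ = {z ∈ ℂ : |z| > 1} ∪ {∞} under the Möbius transformation B₂^n : z ↦ z/(2nz+1) is the open disc centered on the real axis whose boundary passes through the points 1/(2n+1) and 1/(2n-1); in particular B₂^n X₂ ⊆ {|z| < 1}. -/

import Mathlib

open OnePoint

/-- The matrix `A_λ = [[1,λ],[0,1]]` in `SL₂(ℂ)`. -/
def Amat (lam : ℂ) : Matrix.SpecialLinearGroup (Fin 2) ℂ :=
  ⟨!![1, lam; 0, 1], by simp [Matrix.det_fin_two_of]⟩

/-- The matrix `B_μ = [[1,0],[μ,1]]` in `SL₂(ℂ)`. -/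
def Bmat (mu : ℂ) : Matrix.SpecialLinearGroup (Fin 2) ℂ :=
  ⟨!![1, 0; mu, 1], by simp [Matrix.det_fin_two_of]⟩

/-- The action of `SL₂(ℂ)` on the extended complex plane `ℂ ∪ {∞}`
by Möbius transformations. -/
noncomputable def moebius (g : Matrix.SpecialLinearGroup (Fin 2) ℂ) (z : OnePoint ℂ) : OnePoint ℂ :=
  OnePoint.rec
    (if g.1 1 0 = 0 then ∞ else ((g.1 0 0 / g.1 1 0 : ℂ) : OnePoint ℂ))
    (fun w => if g.1 1 0 * w + g.1 1 1 = 0 then ∞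
      else (((g.1 0 0 * w + g.1 0 1) / (g.1 1 0 * w + g.1 1 1) : ℂ) : OnePoint ℂ)) z

lemma Bmat_mul (a b : ℂ) : Bmat a * Bmat b = Bmat (a + b) := by
  ext i j
  rw [Matrix.SpecialLinearGroup.coe_mul]
  fin_cases i <;> fin_cases j <;>
    simp [Bmat, Matrix.SpecialLinearGroup.coe_mul, Matrix.mul_apply, Fin.sum_univ_two]

lemma Bmat_pow (n : ℕ) : Bmat 2 ^ n = Bmat (2 * n) := by
  induction n with
  | zero => ext i j; rw [pow_zero]; fin_cases i <;> fin_cases j <;> simp [Bmat]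
  | succ k ih =>
      rw [pow_succ, ih, Bmat_mul]
      push_cast; ring_nf

lemma moebius_B_coe (c : ℂ) (w : ℂ) : moebius (Bmat c) (w : OnePoint ℂ) =
    if c * w + 1 = 0 then ∞ else ((w / (c * w + 1) : ℂ) : OnePoint ℂ) := by
  show (if (Bmat c).1 1 0 * w + (Bmat c).1 1 1 = 0 then ∞
      else (((Bmat c).1 0 0 * w + (Bmat c).1 0 1) / ((Bmat c).1 1 0 * w + (Bmat c).1 1 1)
        : ℂ) : OnePoint ℂ) = _
  simp [Bmat]

lemma moebius_B_infty (c : ℂ) (hc : c ≠ 0) :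
    moebius (Bmat c) ∞ = ((1 / c : ℂ) : OnePoint ℂ) := by
  show (if (Bmat c).1 1 0 = 0 then ∞ else (((Bmat c).1 0 0 / (Bmat c).1 1 0 : ℂ)
      : OnePoint ℂ)) = _
  simp [Bmat, hc]

lemma disc_iff (n : ℕ) (hn : 1 ≤ n) (u : ℂ) :
    ‖(u - ((1 / (2 * n + 1) + 1 / (2 * n - 1)) / 2 : ℝ))‖ <
      (1 / (2 * n - 1) - 1 / (2 * n + 1)) / 2 ↔
    ‖(1 - 2 * (n : ℂ) * u)‖ < ‖u‖ := by
  have hN : (1:ℝ) ≤ (n:ℝ) := by exact_mod_cast hn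
  set N : ℝ := (n : ℝ) with hNdef
  have ha : (0:ℝ) < 4 * N ^ 2 - 1 := by nlinarith
  have h1 : (2 * N - 1) ≠ 0 := by nlinarith
  have h2 : (2 * N + 1) ≠ 0 := by nlinarith
  have hc : ((1 / (2 * N + 1) + 1 / (2 * N - 1)) / 2 : ℝ) = 2 * N / (4 * N ^ 2 - 1) := by
    rw [div_eq_div_iff (by norm_num) ha.ne']; field_simp; ring
  have hr : ((1 / (2 * N - 1) - 1 / (2 * N + 1)) / 2 : ℝ) = 1 / (4 * N ^ 2 - 1) := by
    rw [div_eq_div_iff (by norm_num) ha.ne']; field_simp; ring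
  rw [hc, hr]
  have hfac : ((4*N^2-1 : ℝ):ℂ) * u - ((2*N:ℝ):ℂ)
      = ((4*N^2-1 : ℝ):ℂ) * (u - ((2*N/(4*N^2-1) : ℝ):ℂ)) := by
    have haC : ((4 * N ^ 2 - 1 : ℝ) : ℂ) ≠ 0 := by exact_mod_cast ha.ne'
    rw [Complex.ofReal_div, mul_sub, mul_div_cancel₀ _ haC]
  have hstep : ‖(u - ((2*N/(4*N^2-1) : ℝ):ℂ))‖ < 1/(4*N^2-1) ↔
      ‖(((4*N^2-1 : ℝ):ℂ) * u - ((2*N:ℝ):ℂ))‖ < 1 := by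
    rw [hfac, norm_mul, Complex.norm_real, Real.norm_eq_abs, abs_of_pos ha, lt_div_iff₀ ha, mul_comm]
  rw [hstep, Complex.norm_def, Complex.norm_def, Complex.norm_def,
    Real.sqrt_lt' one_pos, one_pow,
    Real.sqrt_lt_sqrt_iff (Complex.normSq_nonneg _)]
  simp only [Complex.normSq_apply, Complex.sub_re, Complex.sub_im, Complex.ofReal_re,
    Complex.ofReal_im, Complex.one_re, Complex.one_im, Complex.mul_re, Complex.mul_im,
    Complex.re_ofNat, Complex.im_ofNat, Complex.natCast_re, Complex.natCast_im, ← hNdef]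
  ring_nf
  constructor <;> intro h <;> nlinarith [ha, sq_nonneg u.im, sq_nonneg (2*N*u.re - 1)]

lemma image_eq (n : ℕ) (hn : 1 ≤ n) :
    moebius (Bmat 2 ^ n) ''
        (((↑) : ℂ → OnePoint ℂ) '' {z : ℂ | 1 < ‖z‖} ∪ {∞}) =
      ((↑) : ℂ → OnePoint ℂ) '' {u : ℂ | ‖(1 - 2 * (n:ℂ) * u)‖ < ‖u‖} := by
  have hNC : ((n:ℂ)) ≠ 0 := by
    exact_mod_cast Nat.cast_ne_zero.mpr (by omega)
  have h2n : (2 * (n:ℂ)) ≠ 0 := by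
    simp [hNC]
  have hNge : (1:ℝ) ≤ (n:ℝ) := by exact_mod_cast hn
  rw [Bmat_pow]
  apply Set.eq_of_subset_of_subset
  · rintro z ⟨x, hx, rfl⟩
    rcases hx with ⟨w, hw, rfl⟩ | hx
    · -- x = ↑w, |w| > 1
      have hw1 : (1:ℝ) < ‖w‖ := hw
      have hd : 2 * (n:ℂ) * w + 1 ≠ 0 := by
        intro h0
        have : ‖(2 * (n:ℂ) * w)‖ = 1 := by
          have : 2 * (n:ℂ) * w = -1 := by linear_combination h0
          rw [this]; simp
        rw [norm_mul, norm_mul] at this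
        simp only [Complex.norm_two, Complex.norm_natCast] at this
        nlinarith [norm_nonneg w]
      rw [moebius_B_coe, if_neg hd]
      refine ⟨w / (2 * (n:ℂ) * w + 1), ?_, rfl⟩
      have hkey : 1 - 2 * (n:ℂ) * (w / (2 * (n:ℂ) * w + 1)) = 1 / (2 * (n:ℂ) * w + 1) := by
        field_simp; ring
      show ‖_‖ < ‖_‖
      rw [hkey, norm_div, norm_div, norm_one]
      have hdpos : 0 < ‖(2 * (n:ℂ) * w + 1)‖ := by
        simpa [norm_pos_iff] using hd
      exact (div_lt_div_iff_of_pos_right hdpos).mpr hw1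
    · -- x = ∞
      have hx' : x = ∞ := hx
      subst hx'
      rw [moebius_B_infty _ h2n]
      refine ⟨1 / (2 * (n:ℂ)), ?_, rfl⟩
      show ‖_‖ < ‖_‖
      rw [show (1:ℂ) - 2 * (n:ℂ) * (1 / (2 * (n:ℂ))) = 0 by field_simp; ring]
      simp only [norm_zero, norm_div, norm_one]
      exact div_pos one_pos (norm_pos_iff.mpr h2n)
  · rintro z ⟨u, hu, rfl⟩
    have hu' : ‖(1 - 2 * (n:ℂ) * u)‖ < ‖u‖ := hu
    by_cases h0 : 1 - 2 * (n:ℂ) * u = 0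
    · have hueq : u = 1 / (2 * (n:ℂ)) := by
        field_simp at h0 ⊢
        linear_combination -h0
      refine ⟨∞, Or.inr rfl, ?_⟩
      rw [moebius_B_infty _ h2n, hueq]
    · set w := u / (1 - 2 * (n:ℂ) * u) with hwdef
      have hden : 0 < ‖(1 - 2 * (n:ℂ) * u)‖ := by
        simpa [norm_pos_iff] using h0
      have hw1 : 1 < ‖w‖ := by
        rw [hwdef, norm_div, lt_div_iff₀ hden, one_mul]
        exact hu'
      refine ⟨(w : OnePoint ℂ), Or.inl ⟨w, hw1, rfl⟩, ?_⟩
      have hd2 : 2 * (n:ℂ) * w + 1 = 1 / (1 - 2 * (n:ℂ) * u) := by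
        rw [hwdef]; field_simp; ring
      have hd2ne : 2 * (n:ℂ) * w + 1 ≠ 0 := by
        rw [hd2]; exact one_div_ne_zero h0
      rw [moebius_B_coe, if_neg hd2ne, hd2, hwdef]
      congr 1
      field_simp
      exact mul_div_cancel_right₀ u (by contrapose! h0; linear_combination h0)

/-- For every integer `n ≥ 1`, the image of `X₂ = {|z| > 1} ∪ {∞}` under
`B₂^n : z ↦ z/(2nz+1)` is the open disc centered on the real axis whose boundary passes
through `1/(2n+1)` and `1/(2n-1)`; in particular `B₂^n X₂ ⊆ {|z| < 1}`. -/
theorem stmt_3 (n : ℕ) (hn : 1 ≤ n) :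
    moebius (Bmat 2 ^ n) ''
        (((↑) : ℂ → OnePoint ℂ) '' {z : ℂ | 1 < ‖z‖} ∪ {∞}) =
      ((↑) : ℂ → OnePoint ℂ) ''
        {w : ℂ | ‖(w - ((1 / (2 * n + 1) + 1 / (2 * n - 1)) / 2 : ℝ))‖ <
          (1 / (2 * n - 1) - 1 / (2 * n + 1)) / 2} ∧
    ∀ z ∈ moebius (Bmat 2 ^ n) ''
        (((↑) : ℂ → OnePoint ℂ) '' {z : ℂ | 1 < ‖z‖} ∪ {∞}),
      ∃ u : ℂ, z = u ∧ ‖u‖ < 1 := by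
  have hsets : {w : ℂ | ‖(w - ((1 / (2 * n + 1) + 1 / (2 * n - 1)) / 2 : ℝ))‖ <
          (1 / (2 * n - 1) - 1 / (2 * n + 1)) / 2}
      = {u : ℂ | ‖(1 - 2 * (n:ℂ) * u)‖ < ‖u‖} :=
    Set.ext fun u => disc_iff n hn u
  constructor
  · rw [image_eq n hn, hsets]
  · intro z hz
    rw [image_eq n hn] at hz
    obtain ⟨u, hu, rfl⟩ := hz
    refine ⟨u, rfl, ?_⟩
    have hu' : ‖(1 - 2 * (n:ℂ) * u)‖ < ‖u‖ := hu
    have htri := norm_sub_norm_le (2 * (n:ℂ) * u) 1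
    rw [norm_sub_rev] at htri
    have habs : ‖(2 * (n:ℂ) * u)‖ = 2 * (n:ℝ) * ‖u‖ := by
      rw [norm_mul, norm_mul]; simp
    have hNge : (1:ℝ) ≤ (n:ℝ) := by exact_mod_cast hn
    rw [habs, norm_one] at htri
    nlinarith [norm_nonneg u,
      mul_nonneg (sub_nonneg.mpr hNge) (norm_nonneg u)]
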